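/- arXiv:1605.04703 — 8 statements merged into one kernel-verified Lean document; each statement's English description precedes it below -/
import Mathlib

section
/- Let λ ∈ ℂ be nonzero, μ, ν real constants with 2λ + μ ≠ 0. The boundary value problem v₁' + (μ+λ)v₁ − ν v₂ = 0, v₂' − λ v₂ = 0 on (0,1) with v₁(0) = 0 and v₁(1) = v₂(1) has a nonzero solution (v₁, v₂) if and only if ν e^{−μ−2λ} = ν − 2λ − μ. -/
open Set Complex

lemma expc_deriv (c : ℂ) (x : ℝ) :
    HasDerivAt (fun t : ℝ => Complex.exp (c * t)) (c * Complex.exp (c * x)) x := by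
  simpa [mul_comm] using (((hasDerivAt_id (x:ℂ)).const_mul c).cexp).comp_ofReal

lemma expc_cont (c : ℂ) : Continuous (fun t : ℝ => Complex.exp (c * t)) :=
  Complex.continuous_exp.comp (continuous_const.mul Complex.continuous_ofReal)

lemma eqOn_ext {f g : ℝ → ℂ} (hf : ContinuousOn f (Set.Icc 0 1))
    (hg : ContinuousOn g (Set.Icc 0 1)) (h : Set.EqOn f g (Set.Ioo 0 1)) :
    Set.EqOn f g (Set.Icc 0 1) := by
  intro x hx
  have hx' : x ∈ closure (Set.Ioo (0:ℝ) 1) := by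
    rwa [closure_Ioo (by norm_num : (0:ℝ) ≠ 1)]
  have hne : (nhdsWithin x (Set.Ioo (0:ℝ) 1)).NeBot :=
    mem_closure_iff_nhdsWithin_neBot.mp hx'
  have hf' : Filter.Tendsto f (nhdsWithin x (Set.Ioo 0 1)) (nhds (f x)) :=
    (hf x hx).mono Set.Ioo_subset_Icc_self
  have hg' : Filter.Tendsto g (nhdsWithin x (Set.Ioo 0 1)) (nhds (g x)) :=
    (hg x hx).mono Set.Ioo_subset_Icc_self
  exact tendsto_nhds_unique hf'
    (hg'.congr' (Filter.eventuallyEq_of_mem self_mem_nhdsWithin fun y hy => (h hy).symm))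

lemma const_of_deriv0 {f : ℝ → ℂ} (hf : ∀ x ∈ Set.Ioo (0:ℝ) 1, HasDerivAt f 0 x)
    {x y : ℝ} (hx : x ∈ Set.Ioo (0:ℝ) 1) (hy : y ∈ Set.Ioo (0:ℝ) 1) : f x = f y := by
  apply (convex_Ioo (0:ℝ) 1).is_const_of_fderivWithin_eq_zero (𝕜 := ℝ)
    (fun z hz => ((hf z hz).differentiableAt).differentiableWithinAt) ?_ hx hy
  intro z hz
  rw [fderivWithin_of_isOpen isOpen_Ioo hz, (hf z hz).hasFDerivAt.fderiv]
  ext1; simp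

/-- The boundary value problem `v₁' + (μ+λ)v₁ - ν v₂ = 0`, `v₂' - λ v₂ = 0` on `(0,1)`
with `v₁(0) = 0`, `v₁(1) = v₂(1)` has a nonzero solution iff `ν e^{-μ-2λ} = ν - 2λ - μ`. -/
theorem stmt3 (lam : ℂ) (μ ν : ℝ) (hlam : lam ≠ 0) (hdenom : 2 * lam + (μ : ℂ) ≠ 0) :
    (∃ v₁ v₂ : ℝ → ℂ,
      ContinuousOn v₁ (Set.Icc 0 1) ∧ ContinuousOn v₂ (Set.Icc 0 1) ∧
      (∀ x ∈ Set.Ioo (0:ℝ) 1,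
        HasDerivAt v₁ (-((μ : ℂ) + lam) * v₁ x + (ν : ℂ) * v₂ x) x ∧
        HasDerivAt v₂ (lam * v₂ x) x) ∧
      v₁ 0 = 0 ∧ v₁ 1 = v₂ 1 ∧
      ¬ (∀ x ∈ Set.Icc (0:ℝ) 1, v₁ x = 0 ∧ v₂ x = 0)) ↔
    (ν : ℂ) * Complex.exp (-(μ : ℂ) - 2 * lam) = (ν : ℂ) - 2 * lam - (μ : ℂ) := by
  have hd : ((μ:ℂ) + 2 * lam) ≠ 0 := by rwa [add_comm] at hdenom
  constructor
  · rintro ⟨v₁, v₂, hc1, hc2, hode, h0, h1, hnz⟩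
    set c : ℂ := v₂ (1/2) * Complex.exp (-lam * ((1/2 : ℝ) : ℂ)) with hcdef
    -- step 1: v₂ x = c * exp (lam x) on Icc
    set w : ℝ → ℂ := fun x => v₂ x * Complex.exp (-lam * x) with hwdef
    have hw : ∀ x ∈ Set.Ioo (0:ℝ) 1, HasDerivAt w 0 x := by
      intro x hx
      have := ((hode x hx).2).mul (expc_deriv (-lam) x)
      convert this using 1
      · rfl
      · rfl
      ring
    have hwc : ContinuousOn w (Set.Icc 0 1) := hc2.mul (expc_cont (-lam)).continuousOn
    have hwEq : Set.EqOn w (fun _ => c) (Set.Icc 0 1) := by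
      apply eqOn_ext hwc continuousOn_const
      intro x hx
      exact const_of_deriv0 hw hx (by norm_num)
    have hv2 : ∀ x ∈ Set.Icc (0:ℝ) 1, v₂ x = c * Complex.exp (lam * x) := by
      intro x hx
      have h := hwEq hx
      simp only [hwdef] at h
      have : v₂ x * Complex.exp (-lam * x) * Complex.exp (lam * x)
          = c * Complex.exp (lam * x) := by rw [h]
      rwa [mul_assoc, ← Complex.exp_add,
        show -lam * (x:ℂ) + lam * x = 0 by ring, Complex.exp_zero, mul_one] at this
    -- step 2: u constant
    set u : ℝ → ℂ := fun x => ((μ:ℂ) + 2*lam) * v₁ x * Complex.exp (((μ:ℂ)+lam) * x)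
        - (ν:ℂ) * c * Complex.exp (((μ:ℂ)+2*lam) * x) with hudef
    have hu : ∀ x ∈ Set.Ioo (0:ℝ) 1, HasDerivAt u 0 x := by
      intro x hx
      have A := (((hode x hx).1).mul (expc_deriv ((μ:ℂ)+lam) x)).const_mul ((μ:ℂ)+2*lam)
      have B := (expc_deriv ((μ:ℂ)+2*lam) x).const_mul ((ν:ℂ)*c)
      have hAB := A.sub B
      have hmulx : Complex.exp (lam * x) * Complex.exp (((μ:ℂ)+lam) * x)
          = Complex.exp (((μ:ℂ)+2*lam) * x) := by
        rw [← Complex.exp_add]; ring_nf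
      convert hAB using 1
      · rfl
      · ext y; simp only [hudef, Pi.mul_apply, Pi.sub_apply]; ring
      · rw [hv2 x (Set.Ioo_subset_Icc_self hx)]
        linear_combination (-((ν:ℂ) * c * ((μ:ℂ)+2*lam))) * hmulx
    have huc : ContinuousOn u (Set.Icc 0 1) :=
      ((continuousOn_const.mul hc1).mul (expc_cont _).continuousOn).sub
        (continuousOn_const.mul (expc_cont _).continuousOn)
    have huEq : Set.EqOn u (fun _ => u (1/2)) (Set.Icc 0 1) := by
      apply eqOn_ext huc continuousOn_const
      intro x hx
      exact const_of_deriv0 hu hx (by norm_num)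
    have hu0mem : (0:ℝ) ∈ Set.Icc (0:ℝ) 1 := by norm_num
    have hu1mem : (1:ℝ) ∈ Set.Icc (0:ℝ) 1 := by norm_num
    have hu01 : ∀ x ∈ Set.Icc (0:ℝ) 1, u x = u 0 := fun x hx =>
      (huEq hx).trans (huEq hu0mem).symm
    have hu0 : u 0 = -((ν:ℂ) * c) := by
      simp [hudef, h0]
    -- c ≠ 0
    have hc0 : c ≠ 0 := by
      intro hc
      apply hnz
      intro x hx
      have hv2x : v₂ x = 0 := by rw [hv2 x hx, hc, zero_mul]
      refine ⟨?_, hv2x⟩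
      have := (hu01 x hx).trans hu0
      simp only [hudef, hc, mul_zero, zero_mul, sub_zero, neg_zero] at this
      rcases mul_eq_zero.mp this with h | h
      · exact (mul_eq_zero.mp h).resolve_left hd
      · exact absurd h (Complex.exp_ne_zero _)
    -- boundary relation
    have hbd := (hu01 1 hu1mem).trans hu0
    have hv21 : v₂ 1 = c * Complex.exp lam := by
      simpa using hv2 1 hu1mem
    have hmul1 : Complex.exp lam * Complex.exp ((μ:ℂ)+lam)
        = Complex.exp ((μ:ℂ)+2*lam) := by
      rw [← Complex.exp_add]; ring_nf
    simp only [hudef, Complex.ofReal_one, mul_one, h1, hv21] at hbd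
    have hrel : (ν:ℂ) = ((ν:ℂ) - 2*lam - μ) * Complex.exp ((μ:ℂ)+2*lam) := by
      have hc' : c * ((ν:ℂ) - ((ν:ℂ) - 2*lam - μ) * Complex.exp ((μ:ℂ)+2*lam)) = 0 := by
        linear_combination hbd - (((μ:ℂ)+2*lam) * c) * hmul1
      rcases mul_eq_zero.mp hc' with h | h
      · exact absurd h hc0
      · linear_combination h
    have hE : Complex.exp (-(μ:ℂ) - 2*lam) * Complex.exp ((μ:ℂ)+2*lam) = 1 := by
      rw [← Complex.exp_add, show -(μ:ℂ) - 2*lam + ((μ:ℂ)+2*lam) = 0 by ring,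
        Complex.exp_zero]
    linear_combination Complex.exp (-(μ:ℂ) - 2*lam) * hrel
      + ((ν:ℂ) - 2*lam - μ) * hE
  · intro heq
    refine ⟨fun x => ((ν:ℂ)/(2*lam+μ)) * (Complex.exp (lam * x)
        - Complex.exp (-((μ:ℂ)+lam) * x)),
      fun x => Complex.exp (lam * x),
      (continuous_const.mul ((expc_cont lam).sub (expc_cont _))).continuousOn,
      (expc_cont lam).continuousOn, ?_, ?_, ?_, ?_⟩
    · intro x hx
      constructor
      · have hder := (((expc_deriv lam x).sub (expc_deriv (-((μ:ℂ)+lam)) x)).const_mul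
          ((ν:ℂ)/(2*lam+μ)))
        convert hder using 1
        · rfl
        · rfl
        field_simp
        linear_combination (-(ν:ℂ) * Complex.exp (lam * x)) * mul_inv_cancel₀ hd
      · exact expc_deriv lam x
    · simp
    · have hmul : Complex.exp (-(μ:ℂ) - 2*lam) * Complex.exp lam
          = Complex.exp (-((μ:ℂ)+lam)) := by
        rw [← Complex.exp_add]; ring_nf
      simp only [Complex.ofReal_one, mul_one]
      rw [div_mul_eq_mul_div, div_eq_iff hdenom]
      linear_combination (ν:ℂ) * hmul - Complex.exp lam * heq
    · intro h
      have := (h 0 (by norm_num)).2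
      simp at this
end

section
/- Let d > 0, C_U > 0, C_Ũ > 0, γ > 0, and φ_norm ≥ 0. Suppose Z : [τ,∞) → [0,∞) is continuous and satisfies (a) Z(t) ≤ C_Ũ · φ_norm for τ ≤ t ≤ τ + d, and (b) Z(t) ≤ C_U β ∫_{t−d}^{t} Z(s) ds for t > τ + d, where 0 < β < ε and ε > 0 is defined by the equation (1/d)·log(C_U ε d) + C_U ε = −γ. Then Z(t) ≤ M e^{−γ(t−τ)} φ_norm for all t ≥ τ, where M = C_Ũ e^{(γ + C_U ε)d}. -/
open Set Real MeasureTheory intervalIntegral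

/-- Auxiliary: the bound with a strictly larger constant `Ψ > Φ`. -/
theorem stmt4_aux (τ d CU CT γ Φ β ε Ψ : ℝ)
    (hd : 0 < d) (hCU : 0 < CU) (hCT : 0 < CT) (hγ : 0 < γ) (hΦ : 0 ≤ Φ)
    (hβ0 : 0 < β) (hβε : β < ε)
    (hε : (1 / d) * Real.log (CU * ε * d) + CU * ε = -γ)
    (Z : ℝ → ℝ) (hZc : ContinuousOn Z (Set.Ici τ)) (hZnn : ∀ t, τ ≤ t → 0 ≤ Z t)
    (ha : ∀ t, τ ≤ t → t ≤ τ + d → Z t ≤ CT * Φ)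
    (hb : ∀ t, τ + d < t → Z t ≤ CU * β * ∫ s in (t - d)..t, Z s)
    (hΨ : Φ < Ψ) :
    ∀ t, τ ≤ t →
      Z t ≤ (CT * Real.exp ((γ + CU * ε) * d)) * Real.exp (-γ * (t - τ)) * Ψ := by
  set B : ℝ → ℝ := fun t => (CT * Real.exp ((γ + CU * ε) * d)) * Real.exp (-γ * (t - τ)) * Ψ
    with hB
  have hΨ0 : 0 < Ψ := lt_of_le_of_lt hΦ hΨ
  have hε0 : 0 < ε := hβ0.trans hβε
  have hBcont : Continuous B := by
    fun_prop
  have hBpos : ∀ t, 0 < B t := fun t => by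
    have := Real.exp_pos ((γ + CU * ε) * d)
    have := Real.exp_pos (-γ * (t - τ))
    positivity
  -- the key numerical fact: CU * ε * d = exp (-(γ + CU*ε) * d)
  have hkey : CU * ε * d = Real.exp (-((γ + CU * ε) * d)) := by
    have hpos : 0 < CU * ε * d := by positivity
    have hlog : Real.log (CU * ε * d) = -((γ + CU * ε) * d) := by
      field_simp at hε
      rw [show d * CU * ε = CU * ε * d by ring] at hε
      nlinarith [hε]
    rw [← hlog, Real.exp_log hpos]
  -- θ := CU * β * (exp (γ*d) - 1) / γ < 1, i.e. CU*β*(exp(γ*d)-1) < γ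
  have hθ : CU * β * (Real.exp (γ * d) - 1) < γ := by
    have h1 : 1 - γ * d ≤ Real.exp (-(γ * d)) := by
      have := Real.add_one_le_exp (-(γ * d)); linarith
    have h2 : CU * ε * (Real.exp (γ * d) - 1) ≤ γ := by
      have hexp : Real.exp (-((γ + CU * ε) * d)) * Real.exp (γ * d)
          = Real.exp (-(CU * ε * d)) := by
        rw [← Real.exp_add]; ring_nf
      have hle1 : Real.exp (-(CU * ε * d)) ≤ 1 := by
        rw [Real.exp_le_one_iff]
        nlinarith [mul_pos (mul_pos hCU hε0) hd]
      -- CU*ε*(exp(γd)-1) = (exp(-CUεd) - exp(-(γ+CUε)d)) / d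
      have heq : CU * ε * (Real.exp (γ * d) - 1) * d
          = Real.exp (-(CU * ε * d)) - Real.exp (-((γ + CU * ε) * d)) := by
        linear_combination (Real.exp (γ * d) - 1) * hkey + hexp
      have hexp2 : Real.exp (-((γ + CU * ε) * d)) = Real.exp (-(CU * ε * d)) * Real.exp (-(γ*d)) := by
        rw [← Real.exp_add]; ring_nf
      have hexp3 : 0 < Real.exp (-(CU * ε * d)) := Real.exp_pos _
      -- exp(-CUεd) - exp(-(γ+CUε)d) = exp(-CUεd)(1 - exp(-γd)) ≤ 1 * γ d
      have : Real.exp (-(CU * ε * d)) - Real.exp (-((γ + CU * ε) * d)) ≤ γ * d := by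
        rw [hexp2]
        nlinarith [mul_pos hγ hd, mul_le_mul_of_nonneg_left h1 hexp3.le]
      nlinarith
    have hpos : 0 < Real.exp (γ * d) - 1 := by
      have : (1:ℝ) < Real.exp (γ * d) := by
        rw [← Real.exp_zero]
        exact Real.exp_lt_exp.2 (by positivity)
      linarith
    nlinarith
  -- on [τ, τ+d], Z < B strictly
  have step0 : ∀ t, τ ≤ t → t ≤ τ + d → Z t < B t := by
    intro t ht htd
    have h1 : Z t ≤ CT * Φ := ha t ht htd
    have h2 : CT * Φ < CT * Ψ := by nlinarith
    have h3 : CT * Ψ ≤ B t := by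
      have : (1:ℝ) ≤ Real.exp ((γ + CU * ε) * d) * Real.exp (-γ * (t - τ)) := by
        rw [← Real.exp_add, ← Real.exp_zero]
        apply Real.exp_le_exp.2
        nlinarith [mul_pos (mul_pos hCU hε0) hd, mul_le_mul_of_nonneg_left (show t - τ ≤ d by linarith) hγ.le]
      calc CT * Ψ = 1 * (CT * Ψ) := by ring
        _ ≤ (Real.exp ((γ + CU * ε) * d) * Real.exp (-γ * (t - τ))) * (CT * Ψ) := by
              exact mul_le_mul_of_nonneg_right this (by positivity)
        _ = B t := by rw [hB]; ring
    linarith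
  -- contradiction argument
  by_contra hcon
  push_neg at hcon
  obtain ⟨t₁, ht₁, hZt₁⟩ := hcon
  set S : Set ℝ := {t | τ ≤ t ∧ B t < Z t} with hSdef
  have hSne : S.Nonempty := ⟨t₁, ht₁, hZt₁⟩
  have hSsub : S ⊆ Set.Ioi (τ + d) := by
    intro t ⟨ht, hBZ⟩
    by_contra htd
    simp only [Set.mem_Ioi, not_lt] at htd
    linarith [step0 t ht htd]
  have hSbdd : BddBelow S := ⟨τ + d, fun t ht => (hSsub ht).le⟩
  set t₀ : ℝ := sInf S with ht₀def
  have ht₀ge : τ + d ≤ t₀ := le_csInf hSne fun t ht => (hSsub ht).le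
  have ht₀τ : τ < t₀ := by linarith
  have ht₀cl : t₀ ∈ closure S := csInf_mem_closure hSne hSbdd
  have hZat : ContinuousAt Z t₀ := hZc.continuousAt (Ici_mem_nhds ht₀τ)
  -- B t₀ ≤ Z t₀ by continuity
  have h1 : B t₀ ≤ Z t₀ := by
    have hne : (nhdsWithin t₀ S).NeBot := mem_closure_iff_nhdsWithin_neBot.1 ht₀cl
    have htend : Filter.Tendsto (fun t => Z t - B t) (nhdsWithin t₀ S)
        (nhds (Z t₀ - B t₀)) :=
      ((hZat.sub hBcont.continuousAt).continuousWithinAt)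
    have hev : ∀ᶠ t in nhdsWithin t₀ S, (0:ℝ) ≤ Z t - B t := by
      filter_upwards [self_mem_nhdsWithin] with t ht
      exact sub_nonneg.2 (ht.2.le)
    have := ge_of_tendsto htend hev
    linarith
  -- t₀ > τ + d
  have ht₀gt : τ + d < t₀ := by
    rcases lt_or_eq_of_le ht₀ge with h | h
    · exact h
    · exact absurd h1 (not_le.2 (h ▸ step0 (τ + d) (by linarith) le_rfl))
  -- below t₀ the bound holds
  have hmin : ∀ s, τ ≤ s → s < t₀ → Z s ≤ B s := by
    intro s hs hst
    by_contra hZs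
    push_neg at hZs
    exact absurd (csInf_le hSbdd ⟨hs, hZs⟩) (not_le.2 hst)
  -- integrability
  have hsub : Set.Icc (t₀ - d) t₀ ⊆ Set.Ici τ := fun x hx => by
    simp only [Set.mem_Icc] at hx; simp only [Set.mem_Ici]; linarith [hx.1]
  have hZint : IntervalIntegrable Z volume (t₀ - d) t₀ := by
    apply ContinuousOn.intervalIntegrable
    rw [Set.uIcc_of_le (by linarith)]
    exact hZc.mono hsub
  have hBint : IntervalIntegrable B volume (t₀ - d) t₀ := hBcont.intervalIntegrable _ _
  -- ae inequality on [t₀-d, t₀]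
  have hae : Z ≤ᵐ[volume.restrict (Set.Icc (t₀ - d) t₀)] B := by
    rw [Filter.EventuallyLE, MeasureTheory.ae_restrict_iff' measurableSet_Icc]
    refine MeasureTheory.ae_iff.mpr (measure_mono_null ?_ (measure_singleton t₀))
    intro x hx
    simp only [Set.mem_setOf_eq, not_forall] at hx
    obtain ⟨hxmem, hxlt⟩ := hx
    simp only [Set.mem_Icc] at hxmem
    simp only [Set.mem_singleton_iff]
    by_contra hne
    have hxlt' : x < t₀ := lt_of_le_of_ne hxmem.2 hne
    exact hxlt (hmin x (by linarith [hxmem.1]) hxlt')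
  have hint : (∫ s in (t₀ - d)..t₀, Z s) ≤ ∫ s in (t₀ - d)..t₀, B s :=
    intervalIntegral.integral_mono_ae_restrict (by linarith) hZint hBint hae
  -- compute ∫ B
  have hintB : (∫ s in (t₀ - d)..t₀, B s)
      = (CT * Real.exp ((γ + CU * ε) * d)) * Ψ *
        ((Real.exp (-γ * (t₀ - d - τ)) - Real.exp (-γ * (t₀ - τ))) / γ) := by
    have hderiv : ∀ s ∈ Set.uIcc (t₀ - d) t₀,
        HasDerivAt (fun u => -(1/γ) * Real.exp (-γ * (u - τ)))
          (Real.exp (-γ * (s - τ))) s := by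
      intro s _
      have h : HasDerivAt (fun u : ℝ => -γ * (u - τ)) (-γ) s := by
        simpa using ((hasDerivAt_id s).sub_const τ).const_mul (-γ)
      have := (h.exp).const_mul (-(1/γ))
      convert this using 1
      all_goals try rfl
      field_simp
    have hcont : IntervalIntegrable (fun s => Real.exp (-γ * (s - τ))) volume (t₀ - d) t₀ := by
      apply Continuous.intervalIntegrable; fun_prop
    have heq : (∫ s in (t₀ - d)..t₀, Real.exp (-γ * (s - τ)))
        = (-(1/γ) * Real.exp (-γ * (t₀ - τ))) - (-(1/γ) * Real.exp (-γ * (t₀ - d - τ))) := by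
      exact intervalIntegral.integral_eq_sub_of_hasDerivAt hderiv hcont
    have : (∫ s in (t₀ - d)..t₀, B s)
        = (CT * Real.exp ((γ + CU * ε) * d)) * Ψ * ∫ s in (t₀ - d)..t₀, Real.exp (-γ * (s - τ)) := by
      rw [← intervalIntegral.integral_const_mul]
      apply intervalIntegral.integral_congr
      intro s _
      simp only [hB]; ring
    rw [this, heq]
    field_simp
    ring
  -- final contradiction
  have hZt₀ : Z t₀ ≤ CU * β * ∫ s in (t₀ - d)..t₀, Z s := hb t₀ ht₀gt
  have hexpd : Real.exp (-γ * (t₀ - d - τ)) = Real.exp (-γ * (t₀ - τ)) * Real.exp (γ * d) := by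
    rw [← Real.exp_add]; ring_nf
  have hfinal : CU * β * (∫ s in (t₀ - d)..t₀, B s) < B t₀ := by
    rw [hintB, hexpd]
    have hBt₀ : B t₀ = (CT * Real.exp ((γ + CU * ε) * d)) * Real.exp (-γ * (t₀ - τ)) * Ψ := rfl
    rw [hBt₀]
    have hc : 0 < CT * Real.exp ((γ + CU * ε) * d) := by positivity
    have he : 0 < Real.exp (-γ * (t₀ - τ)) := Real.exp_pos _
    have hfact : CU * β * ((Real.exp (-γ * (t₀ - τ)) * Real.exp (γ * d) - Real.exp (-γ * (t₀ - τ))) / γ)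
        = Real.exp (-γ * (t₀ - τ)) * (CU * β * (Real.exp (γ * d) - 1) / γ) := by
      field_simp
    have hlt : CU * β * (Real.exp (γ * d) - 1) / γ < 1 := by
      rw [div_lt_one hγ]; exact hθ
    calc CU * β * ((CT * Real.exp ((γ + CU * ε) * d)) * Ψ *
          ((Real.exp (-γ * (t₀ - τ)) * Real.exp (γ * d) - Real.exp (-γ * (t₀ - τ))) / γ))
        = ((CT * Real.exp ((γ + CU * ε) * d)) * Real.exp (-γ * (t₀ - τ)) * Ψ) *
          (CU * β * (Real.exp (γ * d) - 1) / γ) := by field_simp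
      _ < ((CT * Real.exp ((γ + CU * ε) * d)) * Real.exp (-γ * (t₀ - τ)) * Ψ) * 1 := by
          apply mul_lt_mul_of_pos_left hlt; positivity
      _ = (CT * Real.exp ((γ + CU * ε) * d)) * Real.exp (-γ * (t₀ - τ)) * Ψ := by ring
  have hmul : CU * β * (∫ s in (t₀ - d)..t₀, Z s) ≤ CU * β * ∫ s in (t₀ - d)..t₀, B s := by
    apply mul_le_mul_of_nonneg_left hint; positivity
  linarith

/-- The key integral-inequality lemma: if `Z` is bounded by `C_Ũ Φ` on `[τ, τ+d]` and
satisfies `Z(t) ≤ C_U β ∫_{t-d}^t Z` for `t > τ + d` with `0 < β < ε`, where `ε` solves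
`(1/d) log(C_U ε d) + C_U ε = -γ`, then `Z(t) ≤ M e^{-γ(t-τ)} Φ` with
`M = C_Ũ e^{(γ + C_U ε) d}`. -/
theorem stmt4 (τ d CU CT γ Φ β ε : ℝ)
    (hd : 0 < d) (hCU : 0 < CU) (hCT : 0 < CT) (hγ : 0 < γ) (hΦ : 0 ≤ Φ)
    (hβ0 : 0 < β) (hβε : β < ε)
    (hε : (1 / d) * Real.log (CU * ε * d) + CU * ε = -γ)
    (Z : ℝ → ℝ) (hZc : ContinuousOn Z (Set.Ici τ)) (hZnn : ∀ t, τ ≤ t → 0 ≤ Z t)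
    (ha : ∀ t, τ ≤ t → t ≤ τ + d → Z t ≤ CT * Φ)
    (hb : ∀ t, τ + d < t → Z t ≤ CU * β * ∫ s in (t - d)..t, Z s) :
    ∀ t, τ ≤ t →
      Z t ≤ (CT * Real.exp ((γ + CU * ε) * d)) * Real.exp (-γ * (t - τ)) * Φ := by
  intro t ht
  have hc : 0 < CT * Real.exp ((γ + CU * ε) * d) * Real.exp (-γ * (t - τ)) := by positivity
  refine le_of_forall_pos_le_add ?_
  intro δ hδ
  have hΨ : Φ < Φ + δ / (CT * Real.exp ((γ + CU * ε) * d) * Real.exp (-γ * (t - τ))) := by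
    have : 0 < δ / (CT * Real.exp ((γ + CU * ε) * d) * Real.exp (-γ * (t - τ))) :=
      div_pos hδ hc
    linarith
  have := stmt4_aux τ d CU CT γ Φ β ε _ hd hCU hCT hγ hΦ hβ0 hβε hε Z hZc hZnn ha hb hΨ t ht
  calc Z t ≤ CT * Real.exp ((γ + CU * ε) * d) * Real.exp (-γ * (t - τ)) *
        (Φ + δ / (CT * Real.exp ((γ + CU * ε) * d) * Real.exp (-γ * (t - τ)))) := this
    _ = CT * Real.exp ((γ + CU * ε) * d) * Real.exp (-γ * (t - τ)) * Φ + δ := by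
        field_simp
    _ ≤ _ := le_rfl
end

section
/- Suppose Z : [τ,∞) → [0,∞) is continuous, Z(t) ≤ C_Ũ Φ for τ ≤ t ≤ τ + d, and Z(t) ≤ C_U β ∫_{t−d}^{t} Z(s) ds for t > τ + d. Then for every integer k ≥ 1, Z(t) ≤ C_Ũ (C_U β d)^k e^{C_U β (t−τ−d)} Φ for all t with kd < t − τ ≤ (k+1)d. -/
open intervalIntegral MeasureTheory


lemma exp_integral' (M c a b : ℝ) (hM : M ≠ 0) :
    ∫ s in a..b, Real.exp (M * (s - c)) =
      (Real.exp (M * (b - c)) - Real.exp (M * (a - c))) / M := by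
  have h : ∀ x : ℝ, HasDerivAt (fun s => Real.exp (M * (s - c)) / M)
      (Real.exp (M * (x - c))) x := by
    intro x
    have h1 : HasDerivAt (fun s : ℝ => M * (s - c)) M x := by
      simpa using ((hasDerivAt_id x).sub_const c).const_mul M
    have := (h1.exp).div_const M
    simpa [mul_div_assoc, mul_comm, mul_div_cancel_left₀ _ hM] using this
  rw [intervalIntegral.integral_eq_sub_of_hasDerivAt (fun x _ => h x)
      ((Real.continuous_exp.comp (by continuity)).intervalIntegrable a b)]
  ring

lemma gron_aux (τ d CU β : ℝ) (hd : 0 < d) (hM : 0 < CU * β) (Z : ℝ → ℝ)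
    (hZc : ContinuousOn Z (Set.Ici τ))
    (hb : ∀ t, τ + d < t → Z t ≤ CU * β * ∫ s in (t - d)..t, Z s)
    (t₀ : ℝ) (h1 : τ + d ≤ t₀)
    (A A' : ℝ → ℝ) (hA : ∀ t, HasDerivAt A (A' t) t)
    (hA' : ∀ t ∈ Set.Ioo t₀ (t₀ + d), A' t ≤ 0)
    (hAZ : ∀ t ∈ Set.Ioc t₀ (t₀ + d), CU * β * ∫ s in (t - d)..t₀, Z s ≤ A t) :
    ∀ t ∈ Set.Ioc t₀ (t₀ + d), Z t ≤ A t₀ * Real.exp (CU * β * (t - t₀)) := by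
  set M := CU * β with hMdef
  have hτt₀ : τ < t₀ := by linarith
  -- integrability
  have hint : ∀ a b : ℝ, τ ≤ a → τ ≤ b → IntervalIntegrable Z volume a b := by
    intro a b ha hb'
    apply (hZc.mono ?_).intervalIntegrable
    intro x hx
    rcases Set.mem_uIcc.1 hx with h | h
    · exact le_trans ha h.1
    · exact le_trans hb' h.1
  -- derivative of the primitive
  have hP : ∀ t : ℝ, τ < t → HasDerivAt (fun y => ∫ s in t₀..y, Z s) (Z t) t := by
    intro t ht
    have hca : ContinuousAt Z t := hZc.continuousAt (Ici_mem_nhds ht)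
    exact intervalIntegral.integral_hasDerivAt_right (hint t₀ t hτt₀.le ht.le)
      (ContinuousAt.stronglyMeasurableAtFilter isOpen_Ioi (fun x hx =>
        hZc.continuousAt (Ici_mem_nhds hx)) t ht) hca
  set g : ℝ → ℝ := fun t => A t + M * ∫ s in t₀..t, Z s with hgdef
  -- Z ≤ g on Ioc
  have hZg : ∀ t ∈ Set.Ioc t₀ (t₀ + d), Z t ≤ g t := by
    intro t ht
    have ht1 : τ + d < t := lt_of_le_of_lt h1 ht.1
    have hsplit : (∫ s in (t - d)..t, Z s) =
        (∫ s in (t - d)..t₀, Z s) + ∫ s in t₀..t, Z s :=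
      (intervalIntegral.integral_add_adjacent_intervals
        (hint _ _ (by linarith) hτt₀.le) (hint _ _ hτt₀.le (by linarith))).symm
    calc Z t ≤ M * ∫ s in (t - d)..t, Z s := hb t ht1
      _ = M * (∫ s in (t - d)..t₀, Z s) + M * ∫ s in t₀..t, Z s := by
            rw [hsplit]; ring
      _ ≤ A t + M * ∫ s in t₀..t, Z s := by
            have := hAZ t ht
            linarith
  -- the weighted function
  set u : ℝ → ℝ := fun t => g t * Real.exp (-(M * (t - t₀))) with hudef
  have hexp : ∀ x : ℝ, HasDerivAt (fun t => Real.exp (-(M * (t - t₀))))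
      (-M * Real.exp (-(M * (x - t₀)))) x := by
    intro x
    have h1' : HasDerivAt (fun t : ℝ => -(M * (t - t₀))) (-M) x := by
      exact (((hasDerivAt_id x).sub_const t₀).const_mul M).fun_neg.congr_deriv (by simp)
    simpa [mul_comm] using h1'.exp
  have hu : ∀ x : ℝ, τ < x → HasDerivAt u
      ((A' x + M * Z x) * Real.exp (-(M * (x - t₀))) + g x * (-M * Real.exp (-(M * (x - t₀))))) x := by
    intro x hx
    exact (((hA x).add ((hP x hx).const_mul M)).mul (hexp x))
  have hanti : AntitoneOn u (Set.Icc t₀ (t₀ + d)) := by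
    apply antitoneOn_of_deriv_nonpos (convex_Icc _ _)
    · intro x hx
      exact (hu x (lt_of_lt_of_le hτt₀ hx.1)).continuousAt.continuousWithinAt
    · intro x hx
      rw [interior_Icc] at hx
      exact (hu x (hτt₀.trans hx.1)).differentiableAt.differentiableWithinAt
    · intro x hx
      rw [interior_Icc] at hx
      rw [(hu x (hτt₀.trans hx.1)).deriv]
      have hZgx := hZg x ⟨hx.1, hx.2.le⟩
      have hA'x := hA' x hx
      have hexppos : 0 < Real.exp (-(M * (x - t₀))) := Real.exp_pos _
      nlinarith [mul_le_mul_of_nonneg_left hZgx hM.le]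
  intro t ht
  have hut : u t ≤ u t₀ := hanti (Set.left_mem_Icc.2 (by linarith)) ⟨ht.1.le, ht.2⟩ ht.1.le
  have hu0 : u t₀ = A t₀ := by simp [hudef, hgdef]
  have hexppos : 0 < Real.exp (-(M * (t - t₀))) := Real.exp_pos _
  have : g t * Real.exp (-(M * (t - t₀))) ≤ A t₀ := by rwa [hu0] at hut
  have hgt : g t ≤ A t₀ * Real.exp (M * (t - t₀)) := by
    have h2 := mul_le_mul_of_nonneg_right this (Real.exp_pos (M * (t - t₀))).le
    rwa [mul_assoc, ← Real.exp_add, neg_add_cancel, Real.exp_zero, mul_one] at h2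
  exact (hZg t ht).trans hgt




/-- The inductive step estimate: under the bounds of the integral inequality lemma,
`Z(t) ≤ C_Ũ (C_U β d)^k e^{C_U β (t-τ-d)} Φ` on `kd < t - τ ≤ (k+1)d`. -/
theorem stmt6 (τ d CU CT β Φ : ℝ) (hd : 0 < d) (hCU : 0 < CU) (hCT : 0 < CT)
    (hβ : 0 < β) (hΦ : 0 ≤ Φ)
    (Z : ℝ → ℝ) (hZc : ContinuousOn Z (Set.Ici τ)) (hZnn : ∀ t, τ ≤ t → 0 ≤ Z t)
    (ha : ∀ t, τ ≤ t → t ≤ τ + d → Z t ≤ CT * Φ)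
    (hb : ∀ t, τ + d < t → Z t ≤ CU * β * ∫ s in (t - d)..t, Z s) :
    ∀ k : ℕ, 1 ≤ k → ∀ t : ℝ, (k : ℝ) * d < t - τ → t - τ ≤ ((k : ℝ) + 1) * d →
      Z t ≤ CT * (CU * β * d) ^ k * Real.exp (CU * β * (t - τ - d)) * Φ := by
  have hM : 0 < CU * β := mul_pos hCU hβ
  set M := CU * β with hMdef
  have hint : ∀ a b : ℝ, τ ≤ a → τ ≤ b → IntervalIntegrable Z volume a b := by
    intro a b ha' hb'
    apply (hZc.mono ?_).intervalIntegrable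
    intro x hx
    rcases Set.mem_uIcc.1 hx with h | h
    · exact le_trans ha' h.1
    · exact le_trans hb' h.1
  intro k hk
  induction k, hk using Nat.le_induction with
  | base =>
    intro t ht1 ht2
    push_cast at ht1 ht2
    -- base case via gron_aux with t₀ = τ + d
    have key := gron_aux τ d CU β hd hM Z hZc hb (τ + d) le_rfl
      (fun t => M * CT * Φ * (τ + 2 * d - t)) (fun _ => -(M * CT * Φ))
      (fun t => by
        have h := ((hasDerivAt_id t).const_sub (τ + 2 * d)).const_mul (M * CT * Φ)
        simpa using h)
      (fun x _ => by show -(M * CT * Φ) ≤ 0; nlinarith [mul_nonneg (mul_nonneg hM.le hCT.le) hΦ])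
      ?_ t ⟨by linarith, by linarith⟩
    · have harg : t - (τ + d) = t - τ - d := by ring
      rw [harg] at key
      calc Z t ≤ M * CT * Φ * (τ + 2 * d - (τ + d)) * Real.exp (M * (t - τ - d)) := key
        _ = CT * (M * d) ^ 1 * Real.exp (M * (t - τ - d)) * Φ := by ring
    · intro s hs
      have hmono : (∫ x in (s - d)..(τ + d), Z x) ≤ ∫ _x in (s - d)..(τ + d), CT * Φ := by
        apply intervalIntegral.integral_mono_on (by linarith [hs.2])
          (hint _ _ (by linarith [hs.1]) (by linarith)) (intervalIntegrable_const)
        intro x hx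
        exact ha x (by linarith [hx.1, hs.1]) hx.2
      rw [intervalIntegral.integral_const, smul_eq_mul] at hmono
      have h5 := mul_le_mul_of_nonneg_left hmono hM.le
      show M * (∫ x in (s - d)..(τ + d), Z x) ≤ M * CT * Φ * (τ + 2 * d - s)
      nlinarith
  | succ k hk1 IH =>
    intro t ht1 ht2
    push_cast at ht1 ht2
    have hk1' : (1 : ℝ) ≤ (k : ℝ) := by exact_mod_cast hk1
    set t₀ : ℝ := τ + ((k : ℝ) + 1) * d with ht₀def
    have h1 : τ + d ≤ t₀ := by nlinarith
    set c : ℝ := CT * (M * d) ^ k * Φ with hcdef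
    have hc : 0 ≤ c := by positivity
    have hexpderiv : ∀ x : ℝ, HasDerivAt (fun s => Real.exp (M * (s - τ - 2 * d)))
        (M * Real.exp (M * (x - τ - 2 * d))) x := by
      intro x
      have h0 : HasDerivAt (fun s : ℝ => M * (s - τ - 2 * d)) M x := by
        simpa using (((hasDerivAt_id x).sub_const τ).sub_const (2 * d)).const_mul M
      simpa [mul_comm] using h0.exp
    have key := gron_aux τ d CU β hd hM Z hZc hb t₀ h1
      (fun t => c * (Real.exp (M * ((k : ℝ) * d)) - Real.exp (M * (t - τ - 2 * d))))
      (fun t => -(c * (M * Real.exp (M * (t - τ - 2 * d)))))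
      (fun x => by
        have h := ((hexpderiv x).const_sub (Real.exp (M * ((k : ℝ) * d)))).const_mul c
        exact h.congr_deriv (by ring))
      (fun x _ => by
        show -(c * (M * Real.exp (M * (x - τ - 2 * d)))) ≤ 0
        have h9 : 0 ≤ c * (M * Real.exp (M * (x - τ - 2 * d))) := by positivity
        linarith)
      ?_ t ⟨by simp only [ht₀def]; linarith, by simp only [ht₀def]; linarith⟩
    · -- conclude
      have hAt₀ : c * (Real.exp (M * ((k : ℝ) * d)) - Real.exp (M * (t₀ - τ - 2 * d)))
          ≤ c * (M * d) * Real.exp (M * ((k : ℝ) * d)) := by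
        have e1 : M * (t₀ - τ - 2 * d) = M * ((k : ℝ) * d) + (-(M * d)) := by
          simp only [ht₀def]; ring
        rw [e1, Real.exp_add]
        have h4 : (1 : ℝ) - Real.exp (-(M * d)) ≤ M * d := by
          linarith [Real.add_one_le_exp (-(M * d))]
        calc c * (Real.exp (M * ((k : ℝ) * d))
              - Real.exp (M * ((k : ℝ) * d)) * Real.exp (-(M * d)))
            = c * Real.exp (M * ((k : ℝ) * d)) * (1 - Real.exp (-(M * d))) := by ring
          _ ≤ c * Real.exp (M * ((k : ℝ) * d)) * (M * d) :=
              mul_le_mul_of_nonneg_left h4 (by positivity)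
          _ = c * (M * d) * Real.exp (M * ((k : ℝ) * d)) := by ring
      have hfin : Z t ≤ c * (M * d) * Real.exp (M * ((k : ℝ) * d)) * Real.exp (M * (t - t₀)) := by
        calc Z t ≤ c * (Real.exp (M * ((k : ℝ) * d)) - Real.exp (M * (t₀ - τ - 2 * d)))
              * Real.exp (M * (t - t₀)) := key
          _ ≤ _ := mul_le_mul_of_nonneg_right hAt₀ (Real.exp_pos _).le
      have e2 : Real.exp (M * ((k : ℝ) * d)) * Real.exp (M * (t - t₀))
          = Real.exp (M * (t - τ - d)) := by
        rw [← Real.exp_add]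
        congr 1
        simp only [ht₀def]; ring
      calc Z t ≤ c * (M * d) * (Real.exp (M * ((k : ℝ) * d)) * Real.exp (M * (t - t₀))) := by
            rw [← mul_assoc]; exact hfin
        _ = CT * (M * d) ^ (k + 1) * Real.exp (M * (t - τ - d)) * Φ := by
            rw [e2, hcdef, pow_succ]; ring
    · -- the integral bound hAZ
      intro s hs
      have hsd : τ + (k : ℝ) * d < s - d := by simp only [ht₀def] at hs; linarith [hs.1]
      have hst₀ : s - d ≤ t₀ := by simp only [ht₀def] at hs ⊢; linarith [hs.2]
      have hmono : (∫ x in (s - d)..t₀, Z x)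
          ≤ ∫ x in (s - d)..t₀, c * Real.exp (M * (x - τ - d)) := by
        have hk0 : (0 : ℝ) ≤ (k : ℝ) * d := by positivity
        apply intervalIntegral.integral_mono_on hst₀
          (hint _ _ (by linarith) (by simp only [ht₀def]; linarith))
          ((Continuous.intervalIntegrable (by fun_prop) _ _))
        intro x hx
        have hxk : (k : ℝ) * d < x - τ := by linarith [hx.1]
        have hxk2 : x - τ ≤ ((k : ℝ) + 1) * d := by
          have := hx.2; simp only [ht₀def] at this; linarith
        have := IH x hxk hxk2
        calc Z x ≤ CT * (M * d) ^ k * Real.exp (M * (x - τ - d)) * Φ := this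
          _ = c * Real.exp (M * (x - τ - d)) := by rw [hcdef]; ring
      have hval : (∫ x in (s - d)..t₀, c * Real.exp (M * (x - τ - d)))
          = c * ((Real.exp (M * (t₀ - (τ + d))) - Real.exp (M * (s - d - (τ + d)))) / M) := by
        rw [intervalIntegral.integral_const_mul]
        congr 1
        have := exp_integral' M (τ + d) (s - d) t₀ hM.ne'
        simpa [sub_sub] using this
      rw [hval] at hmono
      have hfin := mul_le_mul_of_nonneg_left hmono hM.le
      have heq : M * (c * ((Real.exp (M * (t₀ - (τ + d))) - Real.exp (M * (s - d - (τ + d)))) / M))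
          = c * (Real.exp (M * ((k : ℝ) * d)) - Real.exp (M * (s - τ - 2 * d))) := by
        have e3 : M * (t₀ - (τ + d)) = M * ((k : ℝ) * d) := by simp only [ht₀def]; ring
        have e4 : M * (s - d - (τ + d)) = M * (s - τ - 2 * d) := by ring
        rw [e3, e4]
        field_simp
      rw [heq] at hfin
      show M * (∫ x in (s - d)..t₀, Z x) ≤
        c * (Real.exp (M * ((k : ℝ) * d)) - Real.exp (M * (s - τ - 2 * d)))
      exact hfin
end

section
/- Let φ : ℝ → ℝ be continuous and 1-periodic. Then the pair u₁(x,t) = φ(x−t), u₂(x,t) = x·φ(x−t) is a continuous solution of the system ∂_t u₁ + ∂_x u₁ = 0, ∂_t u₂ + ∂_x u₂ − u₁ = 0 on (0,1)×(0,∞) (in the sense of the characteristic integral equations; a classical solution on any region where φ is C¹), satisfying the boundary conditions u₁(0,t) = u₂(1,t) and u₂(0,t) = 0 for all t, and the initial conditions u₁(x,0) = φ(x), u₂(x,0) = x φ(x). -/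
/-- For continuous 1-periodic `φ`, the pair `u₁(x,t) = φ(x-t)`, `u₂(x,t) = x φ(x-t)` is a
continuous solution (in the characteristic sense) of `∂_t u₁ + ∂_x u₁ = 0`,
`∂_t u₂ + ∂_x u₂ - u₁ = 0` satisfying `u₁(0,t) = u₂(1,t)`, `u₂(0,t) = 0`,
`u₁(x,0) = φ(x)`, `u₂(x,0) = x φ(x)`. -/
theorem stmt7 (φ : ℝ → ℝ) (hc : Continuous φ) (hper : Function.Periodic φ 1) :
    let u₁ : ℝ → ℝ → ℝ := fun x t => φ (x - t)
    let u₂ : ℝ → ℝ → ℝ := fun x t => x * φ (x - t)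
    (∀ x t s : ℝ, u₁ (x + s) (t + s) = u₁ x t) ∧
    (∀ x t s : ℝ, HasDerivAt (fun s' => u₂ (x + s') (t + s')) (u₁ (x + s) (t + s)) s) ∧
    (∀ t : ℝ, u₁ 0 t = u₂ 1 t) ∧ (∀ t : ℝ, u₂ 0 t = 0) ∧
    (∀ x : ℝ, u₁ x 0 = φ x) ∧ (∀ x : ℝ, u₂ x 0 = x * φ x) := by
  refine ⟨fun x t s => by simp, fun x t s => ?_, fun t => ?_, fun t => by simp,
    fun x => by simp, fun x => by simp⟩
  · have : (fun s' => (x + s') * φ (x + s' - (t + s'))) =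
        fun s' => (x + s') * φ (x - t) := by
      funext s'; ring_nf
    simp only [this, show x + s - (t + s) = x - t by ring]
    have := (hasDerivAt_id s).const_add x |>.mul_const (φ (x - t))
    simpa using this
  · have h := hper (-t)
    rw [neg_add_eq_sub] at h
    simp [← h]
end

section
/- Let φ : ℝ → ℝ be continuous, 1-periodic, continuously differentiable on (0,1), but not continuously differentiable on all of ℝ (e.g. φ' has a jump at integers). Then for every t > 0, the function x ↦ x·φ(x−t) on [0,1] is not continuously differentiable on (0,1) when t ∉ ℤ is such that x−t crosses an integer for some x ∈ (0,1); in particular, for each T > 0 there exists t > T such that the solution u₂(·,t) = x φ(x−t) of the coupled transport system is not C¹ on [0,1]. -/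
/-- No smoothing without the Levy condition: if `φ` is continuous, 1-periodic, C¹ on `(0,1)`
but not C¹ on all of `ℝ`, then for every `T > 0` there is `t > T` such that
`x ↦ x φ(x - t)` is not C¹ on `(0,1)`. -/
theorem stmt8 (φ : ℝ → ℝ) (hc : Continuous φ) (hper : Function.Periodic φ 1)
    (hreg : ContDiffOn ℝ 1 φ (Set.Ioo 0 1)) (hbad : ¬ ContDiff ℝ 1 φ) :
    ∀ T : ℝ, 0 < T → ∃ t : ℝ, T < t ∧
      ¬ ContDiffOn ℝ 1 (fun x => x * φ (x - t)) (Set.Ioo 0 1) := by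
  -- φ is C¹ at every non-integer point
  have hshift : ∀ (n : ℤ) (x : ℝ), φ (x - n) = φ x := by
    intro n x
    have := hper.sub_int_mul_eq (x := x) n
    simpa using this
  have hCAt : ∀ y : ℝ, Int.fract y ≠ 0 → ContDiffAt ℝ 1 φ y := by
    intro y hy
    have h1 : Int.fract y ∈ Set.Ioo (0:ℝ) 1 :=
      ⟨lt_of_le_of_ne (Int.fract_nonneg y) (Ne.symm hy), Int.fract_lt_one y⟩
    have h2 : ContDiffAt ℝ 1 φ (Int.fract y) :=
      hreg.contDiffAt (isOpen_Ioo.mem_nhds h1)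
    have h3 : ContDiffAt ℝ 1 (fun z : ℝ => z - (⌊y⌋ : ℝ)) y :=
      (contDiff_id.sub contDiff_const).contDiffAt
    have h4 : ContDiffAt ℝ 1 (fun z : ℝ => φ (z - (⌊y⌋ : ℝ))) y := by
      have : Int.fract y = y - (⌊y⌋ : ℝ) := rfl
      exact ContDiffAt.comp y (this ▸ h2) h3
    have : (fun z : ℝ => φ (z - (⌊y⌋ : ℝ))) = φ := by
      funext z; exact hshift ⌊y⌋ z
    rwa [this] at h4
  -- there is some point where φ fails to be C¹; it must be "an integer mod 1"
  have hx0 : ∃ x₀ : ℝ, ¬ ContDiffAt ℝ 1 φ x₀ := by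
    by_contra h
    push_neg at h
    exact hbad (contDiff_iff_contDiffAt.mpr h)
  obtain ⟨x₀, hx₀⟩ := hx0
  have hfr : Int.fract x₀ = 0 := by
    by_contra h; exact hx₀ (hCAt x₀ h)
  -- so x₀ = m for an integer m
  have hx₀eq : x₀ = (⌊x₀⌋ : ℝ) := by
    have := Int.fract_add_floor x₀
    rw [hfr] at this; linarith
  set m : ℤ := ⌊x₀⌋ with hm
  intro T hT
  -- choose k large
  obtain ⟨k, hk⟩ := exists_int_gt (T - 1/2 + m)
  refine ⟨1/2 - (m : ℝ) + k, by linarith, ?_⟩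
  set t : ℝ := 1/2 - (m : ℝ) + k with ht
  intro hC
  -- C¹ at 1/2 of x ↦ x φ(x - t)
  have h12 : (1/2 : ℝ) ∈ Set.Ioo (0:ℝ) 1 := by norm_num
  have hg : ContDiffAt ℝ 1 (fun x => x * φ (x - t)) (1/2) :=
    hC.contDiffAt (isOpen_Ioo.mem_nhds h12)
  -- divide by x to get C¹ of x ↦ φ(x - t) at 1/2
  have hdiv : ContDiffAt ℝ 1 (fun x => (x * φ (x - t)) / x) (1/2) :=
    hg.div contDiffAt_id (by norm_num)
  have hphi : ContDiffAt ℝ 1 (fun x => φ (x - t)) (1/2) := by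
    refine hdiv.congr_of_eventuallyEq ?_
    have hne : ∀ᶠ x in nhds (1/2 : ℝ), x ≠ 0 :=
      eventually_ne_nhds (by norm_num)
    filter_upwards [hne] with x hx
    field_simp
  -- compose with y ↦ y + t : C¹ of φ at 1/2 - t = m - k
  have hcomp : ContDiffAt ℝ 1 ((fun x => φ (x - t)) ∘ (fun y : ℝ => y + t)) (1/2 - t) :=
    ContDiffAt.comp _
      (by rw [show (1/2:ℝ) - t + t = 1/2 by ring]; exact hphi)
      ((contDiff_id.add contDiff_const).contDiffAt)
  have hφat : ContDiffAt ℝ 1 φ (1/2 - t) := by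
    have : ((fun x => φ (x - t)) ∘ (fun y : ℝ => y + t)) = φ := by
      funext y; simp [Function.comp]
    rwa [this] at hcomp
  -- shift back by integer k : C¹ of φ at x₀
  have hφx₀ : ContDiffAt ℝ 1 φ x₀ := by
    have h1 : (1/2 : ℝ) - t = (m : ℝ) - k := by rw [ht]; ring
    rw [h1] at hφat
    have h2 : ContDiffAt ℝ 1 (fun z : ℝ => φ (z - (k : ℝ))) x₀ := by
      refine ContDiffAt.comp _ ?_ ((contDiff_id.sub contDiff_const).contDiffAt)
      have : x₀ - (k : ℝ) = (m : ℝ) - k := by rw [hx₀eq, hm]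
      rwa [this]
    have : (fun z : ℝ => φ (z - (k : ℝ))) = φ := by funext z; exact hshift k z
    rwa [this] at h2
  exact hx₀ hφx₀
end

section
/- Let ε ≠ 0 be a real number. For the decoupled system ∂_t u₁ + ∂_x u₁ = 0, ∂_t u₂ + ∂_x u₂ = ε u₂, ∂_t u₃ − ∂_x u₃ = 0 with boundary conditions u₁(0,t) = u₃(0,t), u₂(0,t) = u₃(0,t), u₃(1,t) = u₁(1,t) − u₂(1,t), the iterated boundary operator satisfies ((CP)³z)₁(x,t) = (1 − e^ε) u₃(0, t − x − 2) for all continuous bounded z = (u₁,u₂,u₃); in particular, for no k ∈ ℕ does (CP)^k z vanish identically for all z, while for ε = 0 one has (CP)³ z ≡ 0 for all z. -/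
/-- The composition `C ∘ P` for the system `∂_t u₁ + ∂_x u₁ = 0`, `∂_t u₂ + ∂_x u₂ = ε u₂`,
`∂_t u₃ - ∂_x u₃ = 0` with boundary conditions `u₁(0,t) = u₃(0,t)`, `u₂(0,t) = u₃(0,t)`,
`u₃(1,t) = u₁(1,t) - u₂(1,t)`. -/
noncomputable def stmt10CP (ε : ℝ)
    (z : (ℝ → ℝ → ℝ) × (ℝ → ℝ → ℝ) × (ℝ → ℝ → ℝ)) :
    (ℝ → ℝ → ℝ) × (ℝ → ℝ → ℝ) × (ℝ → ℝ → ℝ) :=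
  (fun x t => z.2.2 0 (t - x),
   fun x t => Real.exp (ε * x) * z.2.2 0 (t - x),
   fun x t => z.1 1 (t + x - 1) - z.2.1 1 (t + x - 1))

noncomputable def stmtS (ε c : ℝ) : (ℝ → ℝ → ℝ) × (ℝ → ℝ → ℝ) × (ℝ → ℝ → ℝ) :=
  (fun _ _ => c, fun x _ => c * Real.exp (ε * x), fun _ _ => 0)

noncomputable def stmtT (d : ℝ) : (ℝ → ℝ → ℝ) × (ℝ → ℝ → ℝ) × (ℝ → ℝ → ℝ) :=
  (fun _ _ => 0, fun _ _ => 0, fun _ _ => d)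

lemma CP_T (ε d : ℝ) : stmt10CP ε (stmtT d) = stmtS ε d := by
  simp only [stmt10CP, stmtT, stmtS]
  refine Prod.ext ?_ (Prod.ext ?_ ?_) <;> funext x t <;> simp <;> ring

lemma CP_S (ε c : ℝ) : stmt10CP ε (stmtS ε c) = stmtT (c * (1 - Real.exp ε)) := by
  simp only [stmt10CP, stmtS, stmtT]
  refine Prod.ext ?_ (Prod.ext ?_ ?_) <;> funext x t <;> simp <;> ring

lemma iter_T (ε : ℝ) (m : ℕ) :
    (stmt10CP ε)^[2 * m] (stmtT 1) = stmtT ((1 - Real.exp ε) ^ m) ∧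
    (stmt10CP ε)^[2 * m + 1] (stmtT 1) = stmtS ε ((1 - Real.exp ε) ^ m) := by
  induction m with
  | zero => simp [CP_T]
  | succ n ih =>
    have h2 : 2 * (n + 1) = (2 * n + 1) + 1 := by ring
    constructor
    · rw [h2, Function.iterate_succ_apply', ih.2, CP_S]
      ring_nf
    · rw [h2, Function.iterate_succ_apply']
      rw [show (2*n+1)+1 = (2*n+1)+1 from rfl]
      rw [Function.iterate_succ_apply', ih.2, CP_S, CP_T]
      ring_nf

/-- For `ε ≠ 0`: `((CP)³z)₁(x,t) = (1 - e^ε) u₃(0, t - x - 2)`; no power of `CP` annihilates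
all continuous bounded `z`; while for `ε = 0` one has `(CP)³ z ≡ 0`. -/
theorem stmt10 (ε : ℝ) (hε : ε ≠ 0) :
    (∀ z : (ℝ → ℝ → ℝ) × (ℝ → ℝ → ℝ) × (ℝ → ℝ → ℝ), ∀ x t : ℝ,
      ((stmt10CP ε)^[3] z).1 x t = (1 - Real.exp ε) * z.2.2 0 (t - x - 2)) ∧
    (∀ k : ℕ, ∃ z : (ℝ → ℝ → ℝ) × (ℝ → ℝ → ℝ) × (ℝ → ℝ → ℝ),
      (Continuous fun q : ℝ × ℝ => z.1 q.1 q.2) ∧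
      (Continuous fun q : ℝ × ℝ => z.2.1 q.1 q.2) ∧
      (Continuous fun q : ℝ × ℝ => z.2.2 q.1 q.2) ∧
      (∃ M, ∀ x t, |z.1 x t| ≤ M ∧ |z.2.1 x t| ≤ M ∧ |z.2.2 x t| ≤ M) ∧
      (stmt10CP ε)^[k] z ≠
        ((fun _ _ => 0, fun _ _ => 0, fun _ _ => 0) :
          (ℝ → ℝ → ℝ) × (ℝ → ℝ → ℝ) × (ℝ → ℝ → ℝ))) ∧
    (∀ z : (ℝ → ℝ → ℝ) × (ℝ → ℝ → ℝ) × (ℝ → ℝ → ℝ),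
      (stmt10CP 0)^[3] z =
        ((fun _ _ => 0, fun _ _ => 0, fun _ _ => 0) :
          (ℝ → ℝ → ℝ) × (ℝ → ℝ → ℝ) × (ℝ → ℝ → ℝ))) := by
  have hone : (1 : ℝ) - Real.exp ε ≠ 0 := by
    intro h
    apply hε
    have : Real.exp ε = Real.exp 0 := by rw [Real.exp_zero]; linarith
    exact Real.exp_injective this
  have hpow : ∀ m : ℕ, (1 - Real.exp ε) ^ m ≠ 0 := fun m => pow_ne_zero m hone
  refine ⟨?_, ?_, ?_⟩
  · intro z x t
    show (stmt10CP ε (stmt10CP ε (stmt10CP ε z))).1 x t = _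
    simp only [stmt10CP]
    rw [show t - x + 0 - 1 - 1 = t - x - 2 by ring, mul_one]
    ring
  · intro k
    refine ⟨stmtT 1, continuous_const, continuous_const, continuous_const,
      ⟨1, fun x t => by simp [stmtT]⟩, ?_⟩
    rcases Nat.even_or_odd k with ⟨m, hm⟩ | ⟨m, hm⟩
    · have hk : k = 2 * m := by omega
      rw [hk, (iter_T ε m).1]
      intro h
      exact hpow m (congrFun (congrFun (congrArg (Prod.snd ∘ Prod.snd) h) 0) 0)
    · have hk : k = 2 * m + 1 := by omega
      rw [hk, (iter_T ε m).2]
      intro h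
      exact hpow m (congrFun (congrFun (congrArg Prod.fst h) 0) 0)
  · intro z
    show stmt10CP 0 (stmt10CP 0 (stmt10CP 0 z)) = _
    simp only [stmt10CP]
    refine Prod.ext ?_ (Prod.ext ?_ ?_) <;> funext x t <;> simp
end

section
/- Let a_j, a_k : [0,1]×ℝ → ℝ be C¹ with |a_j|, |a_k| ≥ Λ₀ > 0, and let ω_j, ω_k be the corresponding characteristic flows (∂_ξ ω_s(ξ,x,t) = 1/a_s(ξ,ω_s(ξ,x,t)), ω_s(x,x,t) = t). Fix η ∈ [0,1], x, t. Then the map ξ ↦ θ(ξ) = ω_k(η, ξ, ω_j(ξ,x,t)) is differentiable with dθ/dξ = [(a_k(ξ,ω_j(ξ,x,t)) − a_j(ξ,ω_j(ξ,x,t)))/(a_j(ξ,ω_j(ξ,x,t)) a_k(ξ,ω_j(ξ,x,t)))] · ∂₃ω_k(η, ξ, ω_j(ξ,x,t)). -/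
open Set Filter Metric Function Asymptotics NNReal Classical

/-- Uniqueness of solutions to `y' = 1/a(τ,y)` when `a` is `C¹` and bounded away from `0`. -/
lemma ode_unique' (a : ℝ → ℝ → ℝ) (Λ₀ : ℝ) (hΛ : 0 < Λ₀)
    (ha : ContDiff ℝ 1 (Function.uncurry a))
    (hb : ∀ x t : ℝ, Λ₀ ≤ |a x t|)
    (f g : ℝ → ℝ)
    (hf : ∀ τ : ℝ, HasDerivAt f (1 / a τ (f τ)) τ)
    (hg : ∀ τ : ℝ, HasDerivAt g (1 / a τ (g τ)) τ)
    (t₀ : ℝ) (heq : f t₀ = g t₀) : f = g := by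
  have hane : ∀ x t : ℝ, a x t ≠ 0 := by
    intro x t h
    have := hb x t
    rw [h, abs_zero] at this; linarith
  have hfc : Continuous f := continuous_iff_continuousAt.mpr fun τ =>
    (hf τ).differentiableAt.continuousAt
  have hgc : Continuous g := continuous_iff_continuousAt.mpr fun τ =>
    (hg τ).differentiableAt.continuousAt
  have hclosed : IsClosed {τ : ℝ | f τ = g τ} := isClosed_eq hfc hgc
  have hopen : IsOpen {τ : ℝ | f τ = g τ} := by
    rw [isOpen_iff_mem_nhds]
    intro τ₀ hτ₀
    obtain ⟨K, U, hU, hLip⟩ := ha.locallyLipschitz (τ₀, f τ₀)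
    obtain ⟨ε, hε, hball⟩ := Metric.mem_nhds_iff.mp hU
    set y₀ := f τ₀ with hy₀
    set Knn : ℝ≥0 := K * (Real.toNNReal Λ₀)⁻¹ * (Real.toNNReal Λ₀)⁻¹ with hKnn
    have hKcoe : (Knn : ℝ) = K * Λ₀⁻¹ * Λ₀⁻¹ := by
      rw [hKnn]
      push_cast [Real.coe_toNNReal _ hΛ.le]
      ring
    set s : ℝ → Set ℝ := fun τ =>
      if τ ∈ Metric.ball τ₀ ε then Metric.ball y₀ ε else (∅ : Set ℝ) with hs
    have hv : ∀ τ, LipschitzOnWith Knn (fun y => 1 / a τ y) (s τ) := by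
      intro τ
      by_cases ht : τ ∈ Metric.ball τ₀ ε
      · simp only [hs, if_pos ht]
        rw [lipschitzOnWith_iff_dist_le_mul]
        intro y hy z hz
        have hmem : ∀ w : ℝ, w ∈ Metric.ball y₀ ε → ((τ, w) : ℝ × ℝ) ∈ U := by
          intro w hw
          apply hball
          rw [mem_ball, Prod.dist_eq]
          exact max_lt (mem_ball.mp ht) (mem_ball.mp hw)
        have hd := hLip.dist_le_mul (τ, y) (hmem y hy) (τ, z) (hmem z hz)
        have hdist : dist ((τ, y) : ℝ × ℝ) (τ, z) = dist y z := by
          rw [Prod.dist_eq]; simp [max_eq_right dist_nonneg]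
        rw [hdist] at hd
        have h4 : |a τ z - a τ y| ≤ K * dist y z := by
          have h : |a τ z - a τ y| = dist (uncurry a (τ, y)) (uncurry a (τ, z)) := by
            rw [Real.dist_eq, abs_sub_comm]; rfl
          rw [h]; exact hd
        calc dist (1 / a τ y) (1 / a τ z)
            = |a τ z - a τ y| / (|a τ y| * |a τ z|) := by
              rw [Real.dist_eq]
              have h1 : 1 / a τ y - 1 / a τ z = (a τ z - a τ y) / (a τ y * a τ z) := by
                field_simp [hane τ y, hane τ z]
              rw [h1, abs_div, abs_mul]
          _ ≤ |a τ z - a τ y| / (Λ₀ * Λ₀) := by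
              apply div_le_div_of_nonneg_left (abs_nonneg _) (by positivity)
              exact mul_le_mul (hb τ y) (hb τ z) hΛ.le (abs_nonneg _)
          _ ≤ (K * dist y z) / (Λ₀ * Λ₀) := by gcongr
          _ = (Knn : ℝ) * dist y z := by
              rw [hKcoe]
              field_simp
      · simp only [hs, if_neg ht]
        exact lipschitzOnWith_empty _ _
    have hfe : ∀ᶠ τ in nhds τ₀, HasDerivAt f (1 / a τ (f τ)) τ ∧ f τ ∈ s τ := by
      have h1 : ∀ᶠ τ in nhds τ₀, τ ∈ Metric.ball τ₀ ε := Metric.ball_mem_nhds τ₀ hε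
      have h2 : ∀ᶠ τ in nhds τ₀, f τ ∈ Metric.ball y₀ ε :=
        hfc.continuousAt (Metric.ball_mem_nhds y₀ hε)
      filter_upwards [h1, h2] with τ ht1 ht2
      exact ⟨hf τ, by simp only [hs, if_pos ht1]; exact ht2⟩
    have hge : ∀ᶠ τ in nhds τ₀, HasDerivAt g (1 / a τ (g τ)) τ ∧ g τ ∈ s τ := by
      have h1 : ∀ᶠ τ in nhds τ₀, τ ∈ Metric.ball τ₀ ε := Metric.ball_mem_nhds τ₀ hε
      have h2 : ∀ᶠ τ in nhds τ₀, g τ ∈ Metric.ball y₀ ε := by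
        have : g τ₀ = y₀ := hτ₀.symm
        exact hgc.continuousAt (by rw [← this]; exact Metric.ball_mem_nhds _ hε)
      filter_upwards [h1, h2] with τ ht1 ht2
      exact ⟨hg τ, by simp only [hs, if_pos ht1]; exact ht2⟩
    have hloc : f =ᶠ[nhds τ₀] g :=
      ODE_solution_unique_of_eventually (Filter.Eventually.of_forall hv) hfe hge hτ₀
    exact hloc
  have := isClopen_iff.mp ⟨hclosed, hopen⟩
  rcases this with h | h
  · exact absurd (h ▸ heq : t₀ ∈ ({} : Set ℝ)) (notMem_empty t₀)
  · funext τ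
    have : τ ∈ {τ : ℝ | f τ = g τ} := h ▸ mem_univ τ
    exact this

/-- Flow (semigroup) property of the characteristic flow. -/
lemma flow_prop (a : ℝ → ℝ → ℝ) (Λ₀ : ℝ) (hΛ : 0 < Λ₀)
    (ha : ContDiff ℝ 1 (Function.uncurry a))
    (hb : ∀ x t : ℝ, Λ₀ ≤ |a x t|)
    (ω : ℝ → ℝ → ℝ → ℝ)
    (hω : ∀ ξ x t : ℝ, HasDerivAt (fun ξ' => ω ξ' x t) (1 / a ξ (ω ξ x t)) ξ)
    (hinit : ∀ x t : ℝ, ω x x t = t) :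
    ∀ η b x t : ℝ, ω η b (ω b x t) = ω η x t := by
  intro η b x t
  have := ode_unique' a Λ₀ hΛ ha hb
    (fun τ => ω τ b (ω b x t)) (fun τ => ω τ x t)
    (fun τ => hω τ b (ω b x t)) (fun τ => hω τ x t)
    b (by simp [hinit])
  exact congrFun this η

/-- Derivative of the implicit function `g` with `ω ξ' ξ (g ξ') = c ξ'`. -/
lemma deriv_key (a : ℝ → ℝ → ℝ) (Λ₀ : ℝ) (hΛ : 0 < Λ₀)
    (hacont : Continuous (Function.uncurry a))
    (hb : ∀ x t : ℝ, Λ₀ ≤ |a x t|)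
    (ω : ℝ → ℝ → ℝ → ℝ)
    (hω : ∀ ξ x t : ℝ, HasDerivAt (fun ξ' => ω ξ' x t) (1 / a ξ (ω ξ x t)) ξ)
    (hinit : ∀ x t : ℝ, ω x x t = t)
    (c g : ℝ → ℝ) (ξ L : ℝ) (hc : HasDerivAt c L ξ)
    (key : ∀ ξ' : ℝ, ω ξ' ξ (g ξ') = c ξ') :
    HasDerivAt g (L - 1 / a ξ (c ξ)) ξ := by
  have hane : ∀ x t : ℝ, a x t ≠ 0 := by
    intro x t h
    have := hb x t
    rw [h, abs_zero] at this; linarith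
  have hgξ : g ξ = c ξ := by
    have h := key ξ
    rwa [hinit] at h
  have hbound : ∀ r τ : ℝ, |ω τ ξ r - r| ≤ (1 / Λ₀) * |τ - ξ| := by
    intro r τ
    have h := Convex.norm_image_sub_le_of_norm_hasDerivWithin_le
      (f := fun τ' => ω τ' ξ r) (f' := fun τ' => 1 / a τ' (ω τ' ξ r)) (s := Set.univ)
      (fun z _ => (hω z ξ r).hasDerivWithinAt)
      (fun z _ => by
        rw [Real.norm_eq_abs, abs_div, abs_one]
        exact one_div_le_one_div_of_le hΛ (hb _ _))
      convex_univ (Set.mem_univ ξ) (Set.mem_univ τ)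
    simp only [Real.norm_eq_abs, hinit] at h
    exact h
  have hgc : ∀ ξ' : ℝ, |g ξ' - c ξ'| ≤ (1 / Λ₀) * |ξ' - ξ| := by
    intro ξ'
    have h := hbound (g ξ') ξ'
    rw [key ξ'] at h
    rwa [abs_sub_comm]
  have hgcont : Filter.Tendsto g (nhds ξ) (nhds (c ξ)) := by
    have h0 : Filter.Tendsto (fun ξ' => g ξ' - c ξ') (nhds ξ) (nhds 0) := by
      have hb2 : ∀ ξ' : ℝ, ‖g ξ' - c ξ'‖ ≤ (1 / Λ₀) * |ξ' - ξ| := fun ξ' => by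
        rw [Real.norm_eq_abs]; exact hgc ξ'
      apply squeeze_zero_norm hb2
      have h1 : Filter.Tendsto (fun ξ' : ℝ => (1 / Λ₀) * |ξ' - ξ|) (nhds ξ)
          (nhds ((1 / Λ₀) * |ξ - ξ|)) :=
        (Continuous.tendsto (by continuity) ξ)
      simpa using h1
    have h2 := h0.add hc.continuousAt
    simpa using h2
  have hB : (fun ξ' => ω ξ' ξ (g ξ') - g ξ' - (ξ' - ξ) * (1 / a ξ (c ξ)))
      =o[nhds ξ] fun ξ' => ξ' - ξ := by
    rw [Asymptotics.isLittleO_iff]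
    intro ε hε
    have hw : ContinuousAt (fun p : ℝ × ℝ => 1 / a p.1 p.2) (ξ, c ξ) :=
      ContinuousAt.div continuousAt_const hacont.continuousAt (hane ξ (c ξ))
    obtain ⟨δ, hδ, hδ'⟩ := Metric.continuousAt_iff.mp hw ε hε
    have E1 : ∀ᶠ ξ' in nhds ξ, |g ξ' - c ξ| < δ / 2 := by
      have h := hgcont (Metric.ball_mem_nhds (c ξ) (half_pos hδ))
      filter_upwards [h] with ξ' hξ'
      rw [Set.mem_preimage, Metric.mem_ball, Real.dist_eq] at hξ'
      exact hξ'
    have E2 : ∀ᶠ ξ' in nhds ξ, |ξ' - ξ| < min δ (δ * Λ₀ / 2) := by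
      have h := Metric.ball_mem_nhds ξ (show (0:ℝ) < min δ (δ * Λ₀ / 2) by positivity)
      filter_upwards [h] with ξ' hξ'
      rw [Metric.mem_ball, Real.dist_eq] at hξ'
      exact hξ'
    filter_upwards [E1, E2] with ξ' h1 h2
    have hseg : ∀ τ ∈ Set.uIcc ξ ξ', |1 / a τ (ω τ ξ (g ξ')) - 1 / a ξ (c ξ)| ≤ ε := by
      intro τ hτ
      have hτξ : |τ - ξ| ≤ |ξ' - ξ| := abs_sub_left_of_mem_uIcc hτ
      have hd1 : |τ - ξ| < δ := lt_of_le_of_lt hτξ (lt_of_lt_of_le h2 (min_le_left _ _))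
      have hd2 : |ω τ ξ (g ξ') - c ξ| < δ := by
        have ha1 : |ω τ ξ (g ξ') - c ξ| ≤ |ω τ ξ (g ξ') - g ξ'| + |g ξ' - c ξ| :=
          abs_sub_le _ _ _
        have ha2 : |τ - ξ| < δ * Λ₀ / 2 :=
          lt_of_le_of_lt hτξ (lt_of_lt_of_le h2 (min_le_right _ _))
        have ha3 : (1 / Λ₀) * |τ - ξ| < δ / 2 := by
          rw [div_mul_eq_mul_div, one_mul, div_lt_iff₀ hΛ]
          calc |τ - ξ| < δ * Λ₀ / 2 := ha2
            _ = δ / 2 * Λ₀ := by ring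
        calc |ω τ ξ (g ξ') - c ξ| ≤ |ω τ ξ (g ξ') - g ξ'| + |g ξ' - c ξ| := ha1
          _ ≤ (1 / Λ₀) * |τ - ξ| + |g ξ' - c ξ| := by
              exact add_le_add (hbound _ _) le_rfl
          _ < δ / 2 + δ / 2 := add_lt_add ha3 h1
          _ = δ := by ring
      have hdp : dist ((τ, ω τ ξ (g ξ')) : ℝ × ℝ) (ξ, c ξ) < δ := by
        rw [Prod.dist_eq]
        exact max_lt (by rw [Real.dist_eq]; exact hd1) (by rw [Real.dist_eq]; exact hd2)
      have h := le_of_lt (hδ' hdp)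
      rwa [Real.dist_eq] at h
    have hmvt := Convex.norm_image_sub_le_of_norm_hasDerivWithin_le
      (f := fun τ => ω τ ξ (g ξ') - τ * (1 / a ξ (c ξ)))
      (f' := fun τ => 1 / a τ (ω τ ξ (g ξ')) - 1 / a ξ (c ξ)) (s := Set.uIcc ξ ξ')
      (fun τ _ => by
        have hd : HasDerivAt (fun τ' => ω τ' ξ (g ξ') - τ' * (1 / a ξ (c ξ)))
            (1 / a τ (ω τ ξ (g ξ')) - 1 / a ξ (c ξ)) τ := by
          have h1 := (hω τ ξ (g ξ')).sub ((hasDerivAt_id τ).mul_const (1 / a ξ (c ξ)))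
          exact h1.congr_deriv (by simp)
        exact hd.hasDerivWithinAt)
      (fun τ hτ => by rw [Real.norm_eq_abs]; exact hseg τ hτ)
      (convex_uIcc ξ ξ') left_mem_uIcc right_mem_uIcc
    have heq2 : ω ξ' ξ (g ξ') - g ξ' - (ξ' - ξ) * (1 / a ξ (c ξ))
        = (ω ξ' ξ (g ξ') - ξ' * (1 / a ξ (c ξ))) - (ω ξ ξ (g ξ') - ξ * (1 / a ξ (c ξ))) := by
      rw [hinit]; ring
    rw [Real.norm_eq_abs, Real.norm_eq_abs, heq2]
    rw [Real.norm_eq_abs, Real.norm_eq_abs] at hmvt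
    exact hmvt
  have hA : (fun ξ' => c ξ' - c ξ - (ξ' - ξ) * L) =o[nhds ξ] fun ξ' => ξ' - ξ := by
    have h := hasDerivAt_iff_isLittleO.mp hc
    simpa [smul_eq_mul] using h
  rw [hasDerivAt_iff_isLittleO]
  have hfun : (fun ξ' => g ξ' - g ξ - (ξ' - ξ) • (L - 1 / a ξ (c ξ)))
      = fun ξ' => (c ξ' - c ξ - (ξ' - ξ) * L)
        - (ω ξ' ξ (g ξ') - g ξ' - (ξ' - ξ) * (1 / a ξ (c ξ))) := by
    funext ξ'
    rw [smul_eq_mul, key ξ', hgξ]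
    ring
  rw [hfun]
  exact hA.sub hB

/-- Jacobian of the change of variables along intersecting characteristics:
`d/dξ [ω_k(η, ξ, ω_j(ξ,x,t))] = ((a_k - a_j)/(a_j a_k))(ξ, ω_j(ξ,x,t)) · ∂₃ω_k(η,ξ,ω_j(ξ,x,t))`. -/
theorem stmt12 (aj ak : ℝ → ℝ → ℝ) (Λ₀ : ℝ) (hΛ : 0 < Λ₀)
    (haj : ContDiff ℝ 1 (Function.uncurry aj))
    (hak : ContDiff ℝ 1 (Function.uncurry ak))
    (hbj : ∀ x t : ℝ, Λ₀ ≤ |aj x t|) (hbk : ∀ x t : ℝ, Λ₀ ≤ |ak x t|)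
    (ωj ωk : ℝ → ℝ → ℝ → ℝ)
    (hωj : ∀ ξ x t : ℝ, HasDerivAt (fun ξ' => ωj ξ' x t) (1 / aj ξ (ωj ξ x t)) ξ)
    (hωjinit : ∀ x t : ℝ, ωj x x t = t)
    (hωk : ∀ ξ x t : ℝ, HasDerivAt (fun ξ' => ωk ξ' x t) (1 / ak ξ (ωk ξ x t)) ξ)
    (hωkinit : ∀ x t : ℝ, ωk x x t = t)
    (D : ℝ → ℝ → ℝ → ℝ)
    (hD : ∀ η ξ s : ℝ, HasDerivAt (fun s' => ωk η ξ s') (D η ξ s) s)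
    (η x t : ℝ) :
    ∀ ξ : ℝ, HasDerivAt (fun ξ' => ωk η ξ' (ωj ξ' x t))
      ((ak ξ (ωj ξ x t) - aj ξ (ωj ξ x t)) / (aj ξ (ωj ξ x t) * ak ξ (ωj ξ x t)) *
        D η ξ (ωj ξ x t)) ξ := by
  intro ξ
  have hanej : aj ξ (ωj ξ x t) ≠ 0 := by
    intro h
    have := hbj ξ (ωj ξ x t)
    rw [h, abs_zero] at this; linarith
  have hanek : ak ξ (ωj ξ x t) ≠ 0 := by
    intro h
    have := hbk ξ (ωj ξ x t)
    rw [h, abs_zero] at this; linarith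
  have flowk := flow_prop ak Λ₀ hΛ hak hbk ωk hωk hωkinit
  set g : ℝ → ℝ := fun ξ' => ωk ξ ξ' (ωj ξ' x t) with hgdef
  have key : ∀ ξ' : ℝ, ωk ξ' ξ (g ξ') = ωj ξ' x t := by
    intro ξ'
    have h := flowk ξ' ξ ξ' (ωj ξ' x t)
    rwa [hωkinit] at h
  have hgd : HasDerivAt g (1 / aj ξ (ωj ξ x t) - 1 / ak ξ (ωj ξ x t)) ξ :=
    deriv_key ak Λ₀ hΛ hak.continuous hbk ωk hωk hωkinit
      (fun ξ' => ωj ξ' x t) g ξ _ (hωj ξ x t) key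
  have hgξ : g ξ = ωj ξ x t := hωkinit ξ (ωj ξ x t)
  have hcomp := (hD η ξ (g ξ)).comp ξ hgd
  have hfun : ((fun s' => ωk η ξ s') ∘ g) = fun ξ' => ωk η ξ' (ωj ξ' x t) := by
    funext ξ'
    exact flowk η ξ ξ' (ωj ξ' x t)
  rw [hfun, hgξ] at hcomp
  refine hcomp.congr_deriv ?_
  rw [div_sub_div _ _ hanej hanek]
  ring
end

section
/- Let μ > 0 and ν > (μ+1)/(1 − e^{−μ}). Set a = μ − ν and b = ν e^{−μ}. Then the real equation x + a + b e^{−x} = 0 has a solution x > 0. -/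
/-- For `ν > (μ+1)/(1 - e^{-μ})`, the real equation `x + (μ - ν) + ν e^{-μ} e^{-x} = 0`
has a positive solution. -/
theorem stmt17 (μ ν : ℝ) (hμ : 0 < μ)
    (hν : (μ + 1) / (1 - Real.exp (-μ)) < ν) :
    ∃ x : ℝ, 0 < x ∧ x + (μ - ν) + ν * Real.exp (-μ) * Real.exp (-x) = 0 := by
  set f : ℝ → ℝ := fun x => x + (μ - ν) + ν * Real.exp (-μ) * Real.exp (-x) with hf
  have hden : 0 < 1 - Real.exp (-μ) := by
    have : Real.exp (-μ) < 1 := Real.exp_lt_one_iff.mpr (by linarith)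
    linarith
  have hνpos : 0 < ν := lt_trans (div_pos (by linarith) hden) hν
  have hkey : (μ + 1) < ν * (1 - Real.exp (-μ)) := by
    rwa [div_lt_iff₀ hden] at hν
  have hf0 : f 0 < 0 := by
    simp only [hf, Real.exp_zero, neg_zero, mul_one, zero_add]
    nlinarith
  have hfν : 0 < f ν := by
    simp only [hf]
    have hp : 0 < ν * Real.exp (-μ) * Real.exp (-ν) := by positivity
    linarith
  have hcont : ContinuousOn f (Set.Icc 0 ν) := by
    fun_prop
  obtain ⟨x, hx, hfx⟩ := intermediate_value_Ioo (le_of_lt hνpos) hcont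
    (Set.mem_Ioo.mpr ⟨hf0, hfν⟩)
  exact ⟨x, hx.1, hfx⟩
end
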